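/- Combinatorial lemma (single-place case): Let n ≥ 2 be even and μ₁ ≥ μ₂ ≥ ⋯ ≥ μ_{n-1} ≥ |μ_n| ≥ 1 be integers and d ∈ ℤ. Then the inequalities 1 - |μ_n| ≤ -(n+d) ≤ |μ_n| - 1 hold if and only if there exists a balanced Kostant representative w ∈ {w⁺, w⁻} such that w⁻¹ · (d e₀ + Σ μ_j e_j) is a dominant integral weight for D_{n+1}, i.e., its coordinates (λ₀,...,λ_n) satisfy λ₀ ≥ λ₁ ≥ ⋯ ≥ λ_{n-1} ≥ |λ_n|. -/
import Mathlib


/-- `(w⁺)⁻¹`: `e_{i+1} ↦ e_i` for `0 ≤ i ≤ n-1`, `e₀ ↦ e_n`, acting on `ℤ^{n+1}`. -/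
def winvPlus (n : ℕ) : (Fin (n+1) → ℤ) → (Fin (n+1) → ℤ) :=
  fun v j => if h : (j : ℕ) = n then v 0
    else v ⟨(j : ℕ) + 1, by have := j.isLt; omega⟩

/-- `(w⁻)⁻¹`: `e_{i+1} ↦ e_i` for `0 ≤ i ≤ n-2`, `e_n ↦ -e_{n-1}`, `e₀ ↦ -e_n`. -/
def winvMinus (n : ℕ) : (Fin (n+1) → ℤ) → (Fin (n+1) → ℤ) :=
  fun v j => if h : (j : ℕ) = n then -(v 0)
    else if h2 : (j : ℕ) = n - 1 then -(v (Fin.last n))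
    else v ⟨(j : ℕ) + 1, by have := j.isLt; omega⟩

/-- `ρ = Σ_{j=0}^{n} (n-j) e_j`. -/
def rhoZ (n : ℕ) : Fin (n+1) → ℤ := fun j => (n : ℤ) - (j : ℕ)

/-- The weight `d e₀ + Σ_{j=1}^n μ_j e_j` as a vector in `ℤ^{n+1}`. -/
def lamvec (n : ℕ) (d : ℤ) (μ : Fin n → ℤ) : Fin (n+1) → ℤ :=
  fun i => if h : (i : ℕ) = 0 then d
    else μ ⟨(i : ℕ) - 1, by have := i.isLt; omega⟩

/-- A weight `(λ₀,…,λ_n)` for `D_{n+1}` is dominant integral if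
`λ₀ ≥ λ₁ ≥ ⋯ ≥ λ_{n-1} ≥ |λ_n|`. -/
def DominantZ (n : ℕ) (l : Fin (n+1) → ℤ) : Prop :=
  (∀ k : Fin n, l k.succ ≤ l k.castSucc) ∧
  |l (Fin.last n)| ≤ l ⟨n - 1, by omega⟩


lemma Lplus_eval (n : ℕ) (d : ℤ) (μ : Fin n → ℤ) (j : Fin (n+1)) (hj : (j : ℕ) < n) :
    (winvPlus n (lamvec n d μ + rhoZ n) - rhoZ n) j = μ ⟨j, hj⟩ - 1 := by
  have hj0 : ((j:ℕ)+1) ≠ 0 := by omega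
  simp only [Pi.sub_apply, Pi.add_apply, winvPlus, lamvec, rhoZ, dif_neg (by omega : (j:ℕ) ≠ n),
    dif_neg hj0]
  push_cast
  ring_nf

lemma Lplus_top (n : ℕ) (d : ℤ) (μ : Fin n → ℤ) (j : Fin (n+1)) (hj : (j : ℕ) = n) :
    (winvPlus n (lamvec n d μ + rhoZ n) - rhoZ n) j = d + n := by
  simp only [Pi.sub_apply, Pi.add_apply, winvPlus, lamvec, rhoZ, dif_pos hj,
    dif_pos rfl, Fin.val_zero, hj]
  push_cast
  ring

lemma Lminus_eval (n : ℕ) (d : ℤ) (μ : Fin n → ℤ) (j : Fin (n+1)) (hj : (j : ℕ) < n - 1) :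
    (winvMinus n (lamvec n d μ + rhoZ n) - rhoZ n) j = μ ⟨j, by omega⟩ - 1 := by
  have hj0 : ((j:ℕ)+1) ≠ 0 := by omega
  simp only [Pi.sub_apply, Pi.add_apply, winvMinus, lamvec, rhoZ,
    dif_neg (by omega : (j:ℕ) ≠ n), dif_neg (by omega : (j:ℕ) ≠ n - 1), dif_neg hj0]
  push_cast
  ring_nf

lemma Lminus_mid (n : ℕ) (hn : 2 ≤ n) (d : ℤ) (μ : Fin n → ℤ) (j : Fin (n+1))
    (hj : (j : ℕ) = n - 1) :
    (winvMinus n (lamvec n d μ + rhoZ n) - rhoZ n) j = -(μ ⟨n-1, by omega⟩) - 1 := by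
  simp only [Pi.sub_apply, Pi.add_apply, winvMinus, lamvec, rhoZ, hj,
    dif_neg (show n - 1 ≠ n by omega), dif_pos rfl, Fin.val_last,
    dif_neg (show n ≠ 0 by omega)]
  push_cast [Nat.cast_sub (show 1 ≤ n by omega)]
  ring

lemma Lminus_top (n : ℕ) (hn : 2 ≤ n) (d : ℤ) (μ : Fin n → ℤ) (j : Fin (n+1))
    (hj : (j : ℕ) = n) :
    (winvMinus n (lamvec n d μ + rhoZ n) - rhoZ n) j = -(d + n) := by
  simp only [Pi.sub_apply, Pi.add_apply, winvMinus, lamvec, rhoZ, dif_pos hj,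
    dif_pos rfl, Fin.val_zero, hj]
  push_cast
  ring

lemma Lplus_eval' (n : ℕ) (d : ℤ) (μ : Fin n → ℤ) (j : Fin (n+1)) (i : Fin n)
    (hij : (j : ℕ) = (i : ℕ)) :
    (winvPlus n (lamvec n d μ + rhoZ n) - rhoZ n) j = μ i - 1 := by
  rw [Lplus_eval n d μ j (by rw [hij]; exact i.isLt)]
  exact congrArg (fun x => x - 1) (congrArg μ (Fin.ext hij))

lemma Lminus_eval' (n : ℕ) (d : ℤ) (μ : Fin n → ℤ) (j : Fin (n+1)) (i : Fin n)
    (hij : (j : ℕ) = (i : ℕ)) (hj : (j : ℕ) < n - 1) :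
    (winvMinus n (lamvec n d μ + rhoZ n) - rhoZ n) j = μ i - 1 := by
  rw [Lminus_eval n d μ j hj]
  exact congrArg (fun x => x - 1) (congrArg μ (Fin.ext hij))

set_option maxHeartbeats 1000000 in
/-- combinatorial lemma, single-place case: for
`μ₁ ≥ ⋯ ≥ μ_{n-1} ≥ |μ_n| ≥ 1` and `d ∈ ℤ`, the inequalities
`1 - |μ_n| ≤ -(n+d) ≤ |μ_n| - 1` hold iff there exists a balanced Kostant
representative `w ∈ {w⁺, w⁻}` such that `w⁻¹ · (d e₀ + μ)` is dominant. -/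
theorem stmt13 (n : ℕ) (hn : 2 ≤ n) (hne : Even n) (d : ℤ) (μ : Fin n → ℤ)
    (hmono : ∀ i j : Fin n, i ≤ j → (j : ℕ) + 1 < n → μ j ≤ μ i)
    (hlast : |μ ⟨n - 1, by omega⟩| ≤ μ ⟨n - 2, by omega⟩)
    (hmin : 1 ≤ |μ ⟨n - 1, by omega⟩|) :
    (1 - |μ ⟨n - 1, by omega⟩| ≤ -((n : ℤ) + d) ∧
      -((n : ℤ) + d) ≤ |μ ⟨n - 1, by omega⟩| - 1) ↔
    (DominantZ n (winvPlus n (lamvec n d μ + rhoZ n) - rhoZ n) ∨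
     DominantZ n (winvMinus n (lamvec n d μ + rhoZ n) - rhoZ n)) := by
  have hnn : n - 1 < n := by omega
  have hmono' : ∀ i j : Fin n, i ≤ j → μ j ≤ μ i := by
    intro i j hij
    by_cases hj : (j : ℕ) + 1 < n
    · exact hmono i j hij hj
    · have hjv : (j : ℕ) = n - 1 := by have := j.isLt; omega
      by_cases hii : (i : ℕ) = n - 1
      · exact le_of_eq (congrArg μ (Fin.ext (by omega)))
      · have hi2 : (i : ℕ) ≤ n - 2 := by have := Fin.le_def.mp hij; omega
        have h2 : μ ⟨n - 2, by omega⟩ ≤ μ i :=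
          hmono i ⟨n - 2, by omega⟩ (Fin.le_def.mpr (by simpa using hi2))
            (by simp; omega)
        calc μ j = μ ⟨n - 1, hnn⟩ := congrArg μ (Fin.ext (by simpa using hjv))
          _ ≤ |μ ⟨n - 1, hnn⟩| := le_abs_self _
          _ ≤ μ ⟨n - 2, by omega⟩ := hlast
          _ ≤ μ i := h2
  constructor
  · rintro ⟨h1, h2⟩
    have habs' : -( |μ ⟨n - 1, hnn⟩| - 1) ≤ (n : ℤ) + d ∧
        (n : ℤ) + d ≤ |μ ⟨n - 1, hnn⟩| - 1 := by constructor <;> omega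
    rcases le_or_gt 0 (μ ⟨n - 1, hnn⟩) with hMpos | hMneg
    · have hMeq : |μ ⟨n - 1, hnn⟩| = μ ⟨n - 1, hnn⟩ := abs_of_nonneg hMpos
      left
      constructor
      · intro k
        by_cases hk : (k : ℕ) + 1 < n
        · rw [Lplus_eval' n d μ k.succ ⟨(k : ℕ) + 1, hk⟩ (by simp),
            Lplus_eval' n d μ k.castSucc k (by simp)]
          have := hmono' k ⟨(k : ℕ) + 1, hk⟩ (Fin.le_def.mpr (by simp))
          omega
        · have hkv : (k : ℕ) + 1 = n := by have := k.isLt; omega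
          rw [Lplus_top n d μ k.succ (by simpa using hkv),
            Lplus_eval' n d μ k.castSucc ⟨n - 1, hnn⟩ (by simp; omega)]
          omega
      · rw [Lplus_top n d μ (Fin.last n) (by simp),
          Lplus_eval' n d μ ⟨n - 1, by omega⟩ ⟨n - 1, hnn⟩ rfl]
        rw [abs_le]; constructor <;> omega
    · have hMeq : |μ ⟨n - 1, hnn⟩| = -(μ ⟨n - 1, hnn⟩) := abs_of_neg hMneg
      have hlast' : -(μ ⟨n - 1, hnn⟩) ≤ μ ⟨n - 2, by omega⟩ :=
        le_trans (neg_le_abs _) hlast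
      right
      constructor
      · intro k
        by_cases hk : (k : ℕ) + 1 < n - 1
        · rw [Lminus_eval' n d μ k.succ ⟨(k : ℕ) + 1, by omega⟩ (by simp) (by simpa using hk),
            Lminus_eval' n d μ k.castSucc k (by simp) (by simp; omega)]
          have := hmono' k ⟨(k : ℕ) + 1, by omega⟩ (Fin.le_def.mpr (by simp))
          omega
        · by_cases hk2 : (k : ℕ) + 1 = n - 1
          · rw [Lminus_mid n hn d μ k.succ (by simpa using hk2),
              Lminus_eval' n d μ k.castSucc ⟨n - 2, by omega⟩ (by simp; omega)
                (by simp; omega)]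
            omega
          · have hkv : (k : ℕ) + 1 = n := by have := k.isLt; omega
            rw [Lminus_top n hn d μ k.succ (by simpa using hkv),
              Lminus_mid n hn d μ k.castSucc (by simp; omega)]
            omega
      · rw [Lminus_top n hn d μ (Fin.last n) (by simp),
          Lminus_mid n hn d μ ⟨n - 1, by omega⟩ (by simp)]
        rw [abs_le]; constructor <;> omega
  · rintro (⟨_, hdom⟩ | ⟨_, hdom⟩)
    · rw [Lplus_top n d μ (Fin.last n) (by simp),
        Lplus_eval' n d μ ⟨n - 1, by omega⟩ ⟨n - 1, hnn⟩ rfl] at hdom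
      have := abs_le.mp hdom
      have hMle : μ ⟨n - 1, hnn⟩ ≤ |μ ⟨n - 1, hnn⟩| := le_abs_self _
      constructor <;> omega
    · rw [Lminus_top n hn d μ (Fin.last n) (by simp),
        Lminus_mid n hn d μ ⟨n - 1, by omega⟩ (by simp)] at hdom
      have := abs_le.mp hdom
      have hMle : -(μ ⟨n - 1, hnn⟩) ≤ |μ ⟨n - 1, hnn⟩| := neg_le_abs _
      constructor <;> omega
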